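/- Let H be a finite type and M, M' : H → O, O' functions such that the partition of H induced by M' refines that induced by M (M'(h₁) = M'(h₂) → M(h₁) = M(h₂)). Let μ : H → ℝ≥0 sum to 1. Define the conditional vulnerability V(M) = Σ_{o ∈ range(M)} max_{h ∈ M⁻¹(o)} μ(h). Then V(M) ≤ V(M'). -/

import Mathlib

theorem vulnerability_le_of_refines {H O O' : Type*} [Fintype H]
    [DecidableEq O] [DecidableEq O'] (M : H → O) (M' : H → O')
    (href : ∀ h₁ h₂ : H, M' h₁ = M' h₂ → M h₁ = M h₂)
    (μ : H → NNReal) (hμ1 : ∑ h : H, μ h = 1) :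
    (∑ o ∈ Finset.univ.image M, (Finset.univ.filter fun h => M h = o).sup μ) ≤
      ∑ o' ∈ Finset.univ.image M', (Finset.univ.filter fun h => M' h = o').sup μ := by
  classical
  by_cases hO : IsEmpty H
  · simp
  rw [not_isEmpty_iff] at hO
  set g : O' → O := fun o' =>
    if hx : ∃ x, M' x = o' then M hx.choose else M (Classical.arbitrary H) with hg
  have hmap : ∀ o' ∈ Finset.univ.image M', g o' ∈ Finset.univ.image M := by
    intro o' ho'
    simp only [Finset.mem_image, Finset.mem_univ, true_and] at ho' ⊢
    obtain ⟨h, rfl⟩ := ho'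
    exact ⟨(⟨h, rfl⟩ : ∃ x, M' x = M' h).choose, by simp [hg]⟩
  have hgM : ∀ h : H, g (M' h) = M h := by
    intro h
    have hx : ∃ x, M' x = M' h := ⟨h, rfl⟩
    simp only [hg, dif_pos hx]
    exact href _ _ hx.choose_spec
  rw [← Finset.sum_fiberwise_of_maps_to hmap]
  refine Finset.sum_le_sum fun o ho => ?_
  refine Finset.sup_le fun h hh => ?_
  simp only [Finset.mem_filter, Finset.mem_univ, true_and] at hh
  calc μ h ≤ (Finset.univ.filter fun x => M' x = M' h).sup μ :=
        Finset.le_sup (by simp)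
    _ ≤ _ := Finset.single_le_sum (f := fun o' => (Finset.univ.filter fun x => M' x = o').sup μ)
        (fun _ _ => zero_le) (by simp [hgM, hh])
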